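/- Under the setting of the line-search least-squares method, with w = (I - yy*)z ≠ 0 a least-squares solution and s = y + τw the line-search minimizer, the minimal value satisfies ‖(A - θI)Vs‖²/‖s‖² = ((τ - 1)/τ) · ‖(A - θI)Vw‖²/‖w‖². -/
import Mathlib


open Matrix
open scoped ComplexConjugate

/-- Squared Euclidean norm of a complex vector. -/
noncomputable def nsq {k : ℕ} (x : Fin k → ℂ) : ℝ := ∑ i, ‖x i‖ ^ 2

/-- Standard Hermitian inner product (conjugate-linear in the first argument). -/
noncomputable def cip {k : ℕ} (x y : Fin k → ℂ) : ℂ := ∑ i, conj (x i) * y i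

/-- Orthogonal projection `(I - yy*) v`. -/
noncomputable def proj {k : ℕ} (y v : Fin k → ℂ) : Fin k → ℂ := v - cip y v • y

lemma cip_self {k : ℕ} (x : Fin k → ℂ) : cip x x = (nsq x : ℂ) := by
  simp [cip, nsq, Complex.conj_mul', Complex.ofReal_sum]

lemma cip_add_right {k : ℕ} (x y z : Fin k → ℂ) : cip x (y + z) = cip x y + cip x z := by
  simp [cip, mul_add, Finset.sum_add_distrib]

lemma cip_smul_right {k : ℕ} (c : ℂ) (x y : Fin k → ℂ) : cip x (c • y) = c * cip x y := by
  simp only [cip, Pi.smul_apply, smul_eq_mul, Finset.mul_sum]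
  congr 1; ext i; ring

lemma cip_conj {k : ℕ} (x y : Fin k → ℂ) : cip x y = conj (cip y x) := by
  simp [cip, map_sum, mul_comm]

lemma cip_add_left {k : ℕ} (x y z : Fin k → ℂ) : cip (x + y) z = cip x z + cip y z := by
  simp [cip, add_mul, Finset.sum_add_distrib]

lemma cip_smul_left {k : ℕ} (c : ℂ) (x y : Fin k → ℂ) : cip (c • x) y = conj c * cip x y := by
  simp only [cip, Pi.smul_apply, smul_eq_mul, _root_.map_mul, Finset.mul_sum]
  congr 1; ext i; ring

lemma cip_eq_dot {k : ℕ} (x y : Fin k → ℂ) : cip x y = star x ⬝ᵥ y := by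
  unfold cip dotProduct
  congr 1

lemma cip_BhB {n k : ℕ} (B : Matrix (Fin n) (Fin k) ℂ) (x y : Fin k → ℂ) :
    cip x ((Bᴴ * B) *ᵥ y) = cip (B *ᵥ x) (B *ᵥ y) := by
  rw [cip_eq_dot, cip_eq_dot, ← Matrix.mulVec_mulVec, Matrix.dotProduct_mulVec, ← Matrix.star_mulVec]

lemma nsq_pos {k : ℕ} {x : Fin k → ℂ} (h : x ≠ 0) : 0 < nsq x := by
  rcases Function.ne_iff.mp h with ⟨i, hi⟩
  have hxi : x i ≠ 0 := hi
  have h1 : (0:ℝ) < ‖x i‖^2 := by have := norm_pos_iff.mpr hxi; positivity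
  exact h1.trans_le (Finset.single_le_sum (f := fun i => ‖x i‖^2) (fun i _ => by positivity) (Finset.mem_univ i))

lemma nsq_ne_zero {k : ℕ} {x : Fin k → ℂ} (h : nsq x ≠ 0) : x ≠ 0 := by
  intro hx; apply h; simp [hx, nsq]

lemma cip_sub_right {k : ℕ} (x y z : Fin k → ℂ) : cip x (y - z) = cip x y - cip x z := by
  simp [cip, mul_sub, Finset.sum_sub_distrib]

lemma cip_neg_right {k : ℕ} (x y : Fin k → ℂ) : cip x (-y) = -cip x y := by
  simp [cip]


lemma quad_nonneg_root {A2 L : ℝ} (h : ∀ x : ℝ, 0 ≤ A2*x^2 + L*x) : L = 0 := by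
  by_contra hL
  set c : ℝ := |A2| + 1 with hc'
  have hc : (0:ℝ) < c := by positivity
  have h2 : (0:ℝ) < L^2 := by positivity
  have key : 0 ≤ A2*L^2 - 2*c*L^2 := by
    have hq := h (-L/(2*c))
    have h4 : (0:ℝ) ≤ 4*c^2 := by positivity
    have h5 := mul_le_mul_of_nonneg_left hq h4
    have heq : 4*c^2*(A2*(-L/(2*c))^2 + L*(-L/(2*c))) = A2*L^2 - 2*c*L^2 := by
      field_simp
      ring
    rw [heq] at h5
    linarith
  have h6 : A2*L^2 ≤ (c-1)*L^2 := by
    apply mul_le_mul_of_nonneg_right _ (sq_nonneg L)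
    rw [hc']
    linarith [le_abs_self A2]
  have h7 : (0:ℝ) < (c+1)*L^2 := by positivity
  nlinarith

theorem stmt7 {n k : ℕ} (A : Matrix (Fin n) (Fin n) ℂ) (V : Matrix (Fin n) (Fin k) ℂ)
    (θ : ℂ) (y z : Fin k → ℂ)
    (hV : Vᴴ * V = 1) (hy : nsq y = 1)
    (hRitz : (Vᴴ * ((A - θ • 1) * V)).mulVec y = 0)
    (M : Matrix (Fin k) (Fin k) ℂ)
    (hM : M = Vᴴ * (A - θ • 1)ᴴ * ((A - θ • 1) * V))
    (w : Fin k → ℂ) (hw : w = proj y z)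
    (hne : proj y (M.mulVec w) = -(proj y (M.mulVec y)))
    (τ : ℝ) (s : Fin k → ℂ) (hs : s = y + (τ : ℂ) • w)
    (hmin : ∀ a b : ℂ, a • y + b • w ≠ 0 →
      nsq ((A - θ • 1).mulVec (V.mulVec s)) / nsq s
        ≤ nsq ((A - θ • 1).mulVec (V.mulVec (a • y + b • w))) / nsq (a • y + b • w))
    (hw0 : w ≠ 0) (hτ0 : τ ≠ 0) :
    nsq ((A - θ • 1).mulVec (V.mulVec s)) / nsq s
      = ((τ - 1) / τ) * (nsq ((A - θ • 1).mulVec (V.mulVec w)) / nsq w) := by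
  set B : Matrix (Fin n) (Fin k) ℂ := (A - θ • 1) * V with hB
  have hMB : M = Bᴴ * B := by rw [hM, hB, Matrix.conjTranspose_mul, Matrix.mul_assoc]
  set ω : ℝ := nsq w with hω
  set δ : ℝ := nsq (B *ᵥ w) with hδ
  set av : ℝ := nsq (B *ᵥ y) with hav
  have hωpos : 0 < ω := nsq_pos hw0
  have cipyy : cip y y = 1 := by rw [cip_self, hy]; norm_num
  have cipyw : cip y w = 0 := by
    rw [hw]; unfold proj
    rw [cip_sub_right, cip_smul_right, cipyy, mul_one, sub_self]
  have cipwy : cip w y = 0 := by rw [cip_conj, cipyw, map_zero]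
  have cipww : cip w w = (ω : ℂ) := cip_self w
  have cipMyy : cip y (M *ᵥ y) = (av : ℂ) := by rw [hMB, cip_BhB, cip_self]
  have cipMww : cip w (M *ᵥ w) = (δ : ℂ) := by rw [hMB, cip_BhB, cip_self]
  have cipMwy : cip w (M *ᵥ y) = -(δ : ℂ) := by
    have h1 := congrArg (cip w) hne
    unfold proj at h1
    rw [cip_neg_right, cip_sub_right, cip_sub_right, cip_smul_right, cip_smul_right,
      cipwy, mul_zero, mul_zero, sub_zero, sub_zero, cipMww] at h1
    linear_combination h1
  have cipMyw : cip y (M *ᵥ w) = -(δ : ℂ) := by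
    have h2 : cip y (M *ᵥ w) = conj (cip w (M *ᵥ y)) := by
      rw [hMB, cip_BhB, cip_BhB, cip_conj]
    rw [h2, cipMwy]
    simp [Complex.conj_ofReal]
  have expand : ∀ t : ℝ, nsq (y + (t:ℂ) • w) = 1 + t^2*ω ∧
      nsq (B *ᵥ (y + (t:ℂ) • w)) = av - 2*t*δ + t^2*δ := by
    intro t
    constructor
    · have hden : (nsq (y + (t:ℂ) • w) : ℂ) = ((1 + t^2*ω : ℝ) : ℂ) := by
        rw [← cip_self]
        simp only [cip_add_left, cip_add_right, cip_smul_left, cip_smul_right,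
          cipyy, cipyw, cipwy, cipww, Complex.conj_ofReal]
        push_cast
        ring
      exact_mod_cast hden
    · have hnum : (nsq (B *ᵥ (y + (t:ℂ) • w)) : ℂ) = ((av - 2*t*δ + t^2*δ : ℝ) : ℂ) := by
        rw [← cip_self, ← cip_BhB, ← hMB, Matrix.mulVec_add, Matrix.mulVec_smul]
        simp only [cip_add_left, cip_add_right, cip_smul_left, cip_smul_right,
          cipMyy, cipMyw, cipMwy, cipMww, Complex.conj_ofReal]
        push_cast
        ring
      exact_mod_cast hnum
  have hmin' : ∀ t : ℝ, (av - 2*τ*δ + τ^2*δ)/(1+τ^2*ω) ≤ (av - 2*t*δ + t^2*δ)/(1+t^2*ω) := by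
    intro t
    have hne0 : (1:ℂ) • y + (t:ℂ) • w ≠ 0 := by
      rw [one_smul]
      apply nsq_ne_zero
      rw [(expand t).1]
      nlinarith [sq_nonneg t]
    have h := hmin 1 (t:ℂ) hne0
    rw [one_smul, hs] at h
    simp only [Matrix.mulVec_mulVec, ← hB] at h
    rw [(expand t).1, (expand t).2, (expand τ).1, (expand τ).2] at h
    exact h
  have hgoal' : nsq ((A - θ • 1).mulVec (V.mulVec s)) / nsq s
      = (av - 2*τ*δ + τ^2*δ)/(1+τ^2*ω) := by
    rw [hs]
    simp only [Matrix.mulVec_mulVec, ← hB]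
    rw [(expand τ).1, (expand τ).2]
  have hgoalw : nsq ((A - θ • 1).mulVec (V.mulVec w)) = δ := by
    simp only [Matrix.mulVec_mulVec, ← hB, hδ]
  rw [hgoal', hgoalw]
  have hDτ : 0 < 1 + τ^2*ω := by nlinarith [sq_nonneg τ]
  have hstep : ∀ t : ℝ, (av - 2*τ*δ + τ^2*δ)*(1+t^2*ω) ≤ (av - 2*t*δ + t^2*δ)*(1+τ^2*ω) := by
    intro t
    have hDt : 0 < 1 + t^2*ω := by nlinarith [sq_nonneg t]
    exact (div_le_div_iff₀ hDτ hDt).mp (hmin' t)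
  have hAll : ∀ x : ℝ, 0 ≤ (δ*(1+τ^2*ω) - (av - 2*τ*δ + τ^2*δ)*ω)*x^2
      + (2*(δ*(1+τ^2*ω) - (av - 2*τ*δ + τ^2*δ)*ω)*τ - 2*δ*(1+τ^2*ω))*x := by
    intro x
    nlinarith [hstep (τ+x)]
  have hL := quad_nonneg_root hAll
  have hkey : (av - 2*τ*δ + τ^2*δ)*(τ*ω) = (τ-1)*δ*(1+τ^2*ω) := by
    linear_combination (-(1:ℝ)/2) * hL
  field_simp
  linear_combination hkey
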